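/- Let O_L be a DVR with residue field λ and fraction field L, and let C be a bounded complex of finitely generated free O_L-modules such that dim_λ H^i(C ⊗ λ) = dim_L H^i(C ⊗ L) for all i. If moreover there is an integer s with H^i(C ⊗ L) = 0 for all i ≠ s, then H^i(C) = 0 for all i ≠ s and H^s(C) is a free O_L-module. -/

import Mathlib

open Function

noncomputable section

/-- Cohomology of a cochain complex `(C, d)` of `O`-modules at position `i`
(more precisely, in degree `i+1`): `ker (d (i+1)) / im (d i)`. -/
abbrev coh {O : Type*} [CommRing O] {C : ℤ → Type*} [∀ i, AddCommGroup (C i)]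
    [∀ i, Module O (C i)] (d : ∀ i : ℤ, C i →ₗ[O] C (i + 1)) (i : ℤ) : Type _ :=
  LinearMap.ker (d (i + 1)) ⧸
    ((LinearMap.range (d i)).comap (LinearMap.ker (d (i + 1))).subtype)

/-- Cohomology of the base-changed complex `k ⊗_O C` as a `k`-module. -/
abbrev cohB {O : Type*} [CommRing O] (k : Type*) [CommRing k] [Algebra O k]
    {C : ℤ → Type*} [∀ i, AddCommGroup (C i)] [∀ i, Module O (C i)]
    (d : ∀ i : ℤ, C i →ₗ[O] C (i + 1)) (i : ℤ) : Type _ :=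
  letI : AddCommGroup (TensorProduct O k (C (i + 1 + 1))) := inferInstance
  letI : AddCommGroup (TensorProduct O k (C (i + 1))) := inferInstance
  LinearMap.ker ((d (i + 1)).baseChange k) ⧸
    ((LinearMap.range ((d i).baseChange k)).comap
      (LinearMap.ker ((d (i + 1)).baseChange k)).subtype)

section Aux

open TensorProduct Module

variable {O : Type*} [CommRing O]

private lemma one_tmul_sum {F : Type*} [CommRing F] [Algebra O F]
    {M : Type*} [AddCommGroup M] [Module O M]
    {ι : Type*} [Fintype ι] (c : ι → O) (u : ι → M) :
    (1 : F) ⊗ₜ[O] (∑ j, c j • u j) = ∑ j, algebraMap O F (c j) • ((1 : F) ⊗ₜ[O] u j) := by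
  rw [TensorProduct.tmul_sum]
  exact Finset.sum_congr rfl fun j _ => by
    rw [TensorProduct.tmul_smul, algebraMap_smul]

private lemma one_tmul_eq_zero {L : Type*} [Field L] [Algebra O L]
    (hinj : Injective (algebraMap O L))
    {M : Type*} [AddCommGroup M] [Module O M] [Module.Free O M] [Module.Finite O M]
    {x : M} (h : (1 : L) ⊗ₜ[O] x = 0) : x = 0 := by
  classical
  let b := Module.Free.chooseBasis O M
  have h1 : (1 : L) ⊗ₜ[O] x = ∑ j, algebraMap O L (b.repr x j) • ((1 : L) ⊗ₜ[O] b j) := by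
    conv_lhs => rw [← b.sum_repr x]
    exact one_tmul_sum _ _
  have h2 : ∀ j, algebraMap O L (b.repr x j) = 0 := by
    have hli := (b.baseChange L).linearIndependent
    rw [Fintype.linearIndependent_iff] at hli
    refine hli _ ?_
    simp only [Basis.baseChange_apply]
    rw [← h1, h]
  have h3 : b.repr x = 0 := by
    ext j
    exact hinj ((h2 j).trans (map_zero _).symm)
  exact b.repr.injective (by rw [h3, map_zero])

private lemma exists_denom_smul_mem {L : Type*} [Field L] [Algebra O L] [IsDomain O]
    [IsFractionRing O L]
    {M : Type*} [AddCommGroup M] [Module O M] [Module.Free O M] [Module.Finite O M]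
    {ι : Type*} [Fintype ι] (v : ι → M) (x : M)
    (hx : (1 : L) ⊗ₜ[O] x ∈ Submodule.span L (Set.range fun j => (1 : L) ⊗ₜ[O] v j)) :
    ∃ s : O, s ≠ 0 ∧ s • x ∈ Submodule.span O (Set.range v) := by
  obtain ⟨g, hg⟩ := (Submodule.mem_span_range_iff_exists_fun L).mp hx
  obtain ⟨b, hb⟩ := IsLocalization.exist_integer_multiples_of_finite (nonZeroDivisors O) g
  choose c hc using hb
  refine ⟨(b : O), nonZeroDivisors.ne_zero b.2, ?_⟩
  have key : (1 : L) ⊗ₜ[O] ((b : O) • x - ∑ j, c j • v j) = 0 := by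
    rw [TensorProduct.tmul_sub, one_tmul_sum, sub_eq_zero]
    calc (1 : L) ⊗ₜ[O] ((b : O) • x)
        = algebraMap O L (b : O) • ((1 : L) ⊗ₜ[O] x) := by
          rw [TensorProduct.tmul_smul, algebraMap_smul]
      _ = algebraMap O L (b : O) • ∑ j, g j • ((1 : L) ⊗ₜ[O] v j) := by rw [hg]
      _ = ∑ j, algebraMap O L (c j) • ((1 : L) ⊗ₜ[O] v j) := by
          rw [Finset.smul_sum]
          exact Finset.sum_congr rfl fun j _ => by
            rw [smul_smul, hc j, Algebra.smul_def]
  have h0 := one_tmul_eq_zero (IsFractionRing.injective O L) key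
  rw [sub_eq_zero] at h0
  rw [h0]
  exact Submodule.sum_mem _ fun j _ =>
    Submodule.smul_mem _ _ (Submodule.subset_span ⟨j, rfl⟩)

private lemma linearIndependent_one_tmul {L : Type*} [Field L] [Algebra O L] [IsDomain O]
    [IsFractionRing O L]
    {M : Type*} [AddCommGroup M] [Module O M] [Module.Free O M] [Module.Finite O M]
    {ι : Type*} [Fintype ι] {v : ι → M} (hv : LinearIndependent O v) :
    LinearIndependent L (fun j => (1 : L) ⊗ₜ[O] v j) := by
  rw [Fintype.linearIndependent_iff]
  intro g hg
  obtain ⟨b, hb⟩ := IsLocalization.exist_integer_multiples_of_finite (nonZeroDivisors O) g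
  choose c hc using hb
  have key : (1 : L) ⊗ₜ[O] (∑ j, c j • v j) = 0 := by
    rw [one_tmul_sum]
    calc ∑ j, algebraMap O L (c j) • ((1 : L) ⊗ₜ[O] v j)
        = algebraMap O L (b : O) • ∑ j, g j • ((1 : L) ⊗ₜ[O] v j) := by
          rw [Finset.smul_sum]
          exact Finset.sum_congr rfl fun j _ => by
            rw [smul_smul, hc j, Algebra.smul_def]
      _ = 0 := by rw [hg, smul_zero]
  have hc0 : ∀ j, c j = 0 :=
    Fintype.linearIndependent_iff.mp hv c
      (one_tmul_eq_zero (IsFractionRing.injective O L) key)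
  intro j
  have h1 := hc j
  rw [hc0 j, map_zero] at h1
  have hbne : algebraMap O L (b : O) ≠ 0 := fun h =>
    nonZeroDivisors.ne_zero b.2 (IsFractionRing.injective O L (h.trans (map_zero _).symm))
  have h2 : algebraMap O L (b : O) * g j = 0 := by
    rw [← Algebra.smul_def, ← h1]
  exact (mul_eq_zero.mp h2).resolve_left hbne

private lemma range_baseChange_eq_span {F : Type*} [CommRing F] [Algebra O F]
    {M N : Type*} [AddCommGroup M] [Module O M] [AddCommGroup N] [Module O N]
    (f : M →ₗ[O] N) {ι : Type*} (v : ι → N)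
    (hsp : Submodule.span O (Set.range v) = LinearMap.range f) :
    LinearMap.range (f.baseChange F)
      = Submodule.span F (Set.range fun j => (1 : F) ⊗ₜ[O] v j) := by
  have key : ∀ y ∈ Submodule.span O (Set.range v),
      (1 : F) ⊗ₜ[O] y ∈ Submodule.span F (Set.range fun j => (1 : F) ⊗ₜ[O] v j) := by
    intro y hy
    induction hy using Submodule.span_induction with
    | mem z hz =>
      obtain ⟨j, rfl⟩ := hz
      exact Submodule.subset_span ⟨j, rfl⟩
    | zero => simp
    | add a b _ _ ha hb =>
      rw [TensorProduct.tmul_add]; exact Submodule.add_mem _ ha hb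
    | smul a z _ hz =>
      rw [TensorProduct.tmul_smul, ← algebraMap_smul F a ((1 : F) ⊗ₜ[O] z)]
      exact Submodule.smul_mem _ _ hz
  apply le_antisymm
  · rintro y ⟨z, rfl⟩
    induction z using TensorProduct.induction_on with
    | zero => simpa using Submodule.zero_mem _
    | tmul a m =>
      rw [LinearMap.baseChange_tmul]
      have h1 : a ⊗ₜ[O] (f m) = a • ((1 : F) ⊗ₜ[O] (f m)) := by
        rw [TensorProduct.smul_tmul', smul_eq_mul, mul_one]
      rw [h1]
      exact Submodule.smul_mem _ _ (key _ (by rw [hsp]; exact LinearMap.mem_range_self f m))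
    | add u w hu hw =>
      rw [map_add]; exact Submodule.add_mem _ hu hw
  · rw [Submodule.span_le]
    rintro _ ⟨j, rfl⟩
    have hv : v j ∈ LinearMap.range f := by
      rw [← hsp]; exact Submodule.subset_span ⟨j, rfl⟩
    obtain ⟨wj, hwj⟩ := hv
    exact ⟨(1 : F) ⊗ₜ[O] wj, by rw [LinearMap.baseChange_tmul, hwj]⟩

private lemma finrank_coh {F : Type*} [Field F] {V W X : Type*}
    [AddCommGroup V] [Module F V] [AddCommGroup W] [Module F W]
    [AddCommGroup X] [Module F X] [FiniteDimensional F W]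
    (g : V →ₗ[F] W) (h : W →ₗ[F] X) (hgh : LinearMap.range g ≤ LinearMap.ker h) :
    Module.finrank F
        (LinearMap.ker h ⧸ (LinearMap.range g).comap (LinearMap.ker h).subtype)
      + Module.finrank F (LinearMap.range g) + Module.finrank F (LinearMap.range h)
      = Module.finrank F W := by
  have h1 := Submodule.finrank_quotient_add_finrank
    ((LinearMap.range g).comap (LinearMap.ker h).subtype)
  have h2 := (Submodule.comapSubtypeEquivOfLe hgh).finrank_eq
  have h3 := LinearMap.finrank_range_add_finrank_ker h
  omega

private lemma finrank_baseChange_eq {F : Type*} [Field F] [Algebra O F] [Nontrivial O]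
    {M : Type*} [AddCommGroup M] [Module O M] [Module.Free O M] [Module.Finite O M] :
    Module.finrank F (F ⊗[O] M) = Module.finrank O M := by
  rw [Module.finrank_eq_card_basis ((Module.Free.chooseBasis O M).baseChange F),
    Module.finrank_eq_card_chooseBasisIndex]

variable [IsDomain O] [IsPrincipalIdealRing O]

private lemma basis_span_range {M N : Type*} [AddCommGroup M] [Module O M]
    [AddCommGroup N] [Module O N] [Module.Free O N] [Module.Finite O N]
    (f : M →ₗ[O] N) :
    Submodule.span O
        (Set.range fun j => ((Module.Free.chooseBasis O (LinearMap.range f) j : N)))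
      = LinearMap.range f := by
  have h : Set.range (fun j => ((Module.Free.chooseBasis O (LinearMap.range f) j : N)))
      = (LinearMap.range f).subtype '' Set.range (Module.Free.chooseBasis O (LinearMap.range f)) :=
    Set.range_comp _ _
  rw [h, Submodule.span_image, Basis.span_eq, Submodule.map_subtype_top]

set_option maxHeartbeats 1000000 in
private lemma finrank_range_baseChange_fractionRing
    {L : Type*} [Field L] [Algebra O L] [IsFractionRing O L]
    {M N : Type*} [AddCommGroup M] [Module O M] [AddCommGroup N] [Module O N]
    [Module.Free O N] [Module.Finite O N] (f : M →ₗ[O] N) :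
    Module.finrank L (LinearMap.range (f.baseChange L))
      = Module.finrank O (LinearMap.range f) := by
  classical
  have hind : LinearIndependent O
      (fun j => ((Module.Free.chooseBasis O (LinearMap.range f) j : N))) :=
    (Module.Free.chooseBasis O (LinearMap.range f)).linearIndependent.map'
      (LinearMap.range f).subtype (Submodule.ker_subtype _)
  rw [range_baseChange_eq_span f _ (basis_span_range f),
    finrank_span_eq_card (linearIndependent_one_tmul hind),
    Module.finrank_eq_card_chooseBasisIndex (R := O) (M := LinearMap.range f)]

private lemma finrank_range_baseChange_le
    {F : Type*} [Field F] [Algebra O F]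
    {M N : Type*} [AddCommGroup M] [Module O M] [AddCommGroup N] [Module O N]
    [Module.Free O N] [Module.Finite O N] (f : M →ₗ[O] N) :
    Module.finrank F (LinearMap.range (f.baseChange F))
      ≤ Module.finrank O (LinearMap.range f) := by
  classical
  rw [range_baseChange_eq_span f _ (basis_span_range f),
    Module.finrank_eq_card_chooseBasisIndex (R := O) (M := LinearMap.range f)]
  exact finrank_range_le_card _

private lemma exists_smul_mem_range
    {L : Type*} [Field L] [Algebra O L] [IsFractionRing O L]
    {M N : Type*} [AddCommGroup M] [Module O M] [AddCommGroup N] [Module O N]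
    [Module.Free O N] [Module.Finite O N] (f : M →ₗ[O] N) (x : N)
    (hx : (1 : L) ⊗ₜ[O] x ∈ LinearMap.range (f.baseChange L)) :
    ∃ s : O, s ≠ 0 ∧ s • x ∈ LinearMap.range f := by
  classical
  rw [range_baseChange_eq_span f _ (basis_span_range f)] at hx
  obtain ⟨s, hs, hmem⟩ := exists_denom_smul_mem _ x hx
  exact ⟨s, hs, by rwa [basis_span_range f] at hmem⟩

private lemma mem_range_of_irreducible_smul
    {kk : Type*} [Field kk] [Algebra O kk]
    {π : O} (hπ : Irreducible π) (hker : RingHom.ker (algebraMap O kk) = Ideal.span {π})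
    {M N : Type*} [AddCommGroup M] [Module O M] [AddCommGroup N] [Module O N]
    [Module.Free O N] [Module.Finite O N] (f : M →ₗ[O] N)
    (hrk : Module.finrank kk (LinearMap.range (f.baseChange kk))
      = Module.finrank O (LinearMap.range f))
    (x : N) (hx : π • x ∈ LinearMap.range f) : x ∈ LinearMap.range f := by
  classical
  set B := Module.Free.chooseBasis O (LinearMap.range f) with hB
  have hcard : Module.finrank kk
      (Submodule.span kk (Set.range fun j => (1 : kk) ⊗ₜ[O] (B j : N)))
      = Fintype.card (Module.Free.ChooseBasisIndex O (LinearMap.range f)) := by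
    rw [← range_baseChange_eq_span f _ (basis_span_range f), hrk,
      Module.finrank_eq_card_chooseBasisIndex]
  have hkind : LinearIndependent kk (fun j => (1 : kk) ⊗ₜ[O] (B j : N)) :=
    linearIndependent_iff_card_eq_finrank_span.mpr hcard.symm
  set c : _ → O := fun j => B.repr ⟨π • x, hx⟩ j with hcdef
  have hsum : π • x = ∑ j, c j • (B j : N) := by
    have h2 := congrArg (LinearMap.range f).subtype (B.sum_repr ⟨π • x, hx⟩)
    rw [map_sum] at h2
    simp only [map_smul, Submodule.subtype_apply] at h2
    exact h2.symm
  have hπ0 : algebraMap O kk π = 0 := by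
    rw [← RingHom.mem_ker, hker]
    exact Ideal.mem_span_singleton_self π
  have h0 : (0 : kk ⊗[O] N) = ∑ j, algebraMap O kk (c j) • ((1 : kk) ⊗ₜ[O] (B j : N)) := by
    rw [← one_tmul_sum, ← hsum, TensorProduct.tmul_smul,
      ← algebraMap_smul kk π ((1 : kk) ⊗ₜ[O] x), hπ0, zero_smul]
  have hc0 : ∀ j, algebraMap O kk (c j) = 0 :=
    Fintype.linearIndependent_iff.mp hkind _ h0.symm
  have hdvd : ∀ j, ∃ e, c j = π * e := by
    intro j
    have hm : c j ∈ RingHom.ker (algebraMap O kk) := by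
      rw [RingHom.mem_ker]; exact hc0 j
    rw [hker, Ideal.mem_span_singleton] at hm
    exact hm
  choose e he using hdvd
  have heq : π • x = π • ∑ j, e j • (B j : N) := by
    rw [hsum, Finset.smul_sum]
    exact Finset.sum_congr rfl fun j _ => by rw [he j, mul_smul]
  have hxx : x = ∑ j, e j • (B j : N) := smul_right_injective N hπ.ne_zero heq
  rw [hxx]
  exact Submodule.sum_mem _ fun j _ => Submodule.smul_mem _ _ (B j).2

end Aux

open TensorProduct Module

set_option maxHeartbeats 1600000 in
/-- Let `O` be a DVR with residue field `k` and fraction field `L`, and let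
`C` be a bounded complex of finite free `O`-modules such that
`dim_k H^i(C ⊗ k) = dim_L H^i(C ⊗ L)` for all `i`.  If there is an integer `s` with
`H^i(C ⊗ L) = 0` for all `i ≠ s`, then `H^i(C) = 0` for all `i ≠ s` and `H^s(C)` is a
free `O`-module. -/
theorem stmt_8
    {O : Type*} [CommRing O] [IsDomain O] [IsDiscreteValuationRing O]
    (k : Type*) [Field k] [Algebra O k]
    (hsurj : Surjective (algebraMap O k))
    (hloc : ∃ π : O, Irreducible π ∧ RingHom.ker (algebraMap O k) = Ideal.span {π})
    (L : Type*) [Field L] [Algebra O L] [IsFractionRing O L]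
    (C : ℤ → Type) [∀ i, AddCommGroup (C i)] [∀ i, Module O (C i)]
    [∀ i, Module.Free O (C i)] [∀ i, Module.Finite O (C i)]
    (hbdd : {i : ℤ | Nontrivial (C i)}.Finite)
    (d : ∀ i : ℤ, C i →ₗ[O] C (i + 1))
    (hdd : ∀ i, (d (i + 1)).comp (d i) = 0)
    (hdim : ∀ i : ℤ, Module.finrank k (cohB k d i) = Module.finrank L (cohB L d i))
    (s : ℤ) (hs : ∀ i : ℤ, i ≠ s → Subsingleton (cohB L d i)) :
    (∀ i : ℤ, i ≠ s → Subsingleton (coh d i)) ∧ Module.Free O (coh d s) := by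
  classical
  obtain ⟨π, hπirr, hπker⟩ := hloc
  -- base-changed complexes are complexes
  have hcompk : ∀ i : ℤ, LinearMap.range ((d i).baseChange k)
      ≤ LinearMap.ker ((d (i + 1)).baseChange k) := by
    intro i
    rw [LinearMap.range_le_ker_iff, ← LinearMap.baseChange_comp, hdd i,
      LinearMap.baseChange_zero]
  have hcompL : ∀ i : ℤ, LinearMap.range ((d i).baseChange L)
      ≤ LinearMap.ker ((d (i + 1)).baseChange L) := by
    intro i
    rw [LinearMap.range_le_ker_iff, ← LinearMap.baseChange_comp, hdd i,
      LinearMap.baseChange_zero]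
  -- dimension identities over both fields
  have hEk : ∀ i : ℤ, Module.finrank k (cohB k d i)
      + Module.finrank k (LinearMap.range ((d i).baseChange k))
      + Module.finrank k (LinearMap.range ((d (i + 1)).baseChange k))
      = Module.finrank O (C (i + 1)) := by
    intro i
    rw [← finrank_baseChange_eq (O := O) (F := k) (M := C (i + 1))]
    exact finrank_coh ((d i).baseChange k) ((d (i + 1)).baseChange k) (hcompk i)
  have hEL : ∀ i : ℤ, Module.finrank L (cohB L d i)
      + Module.finrank L (LinearMap.range ((d i).baseChange L))
      + Module.finrank L (LinearMap.range ((d (i + 1)).baseChange L))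
      = Module.finrank O (C (i + 1)) := by
    intro i
    rw [← finrank_baseChange_eq (O := O) (F := L) (M := C (i + 1))]
    exact finrank_coh ((d i).baseChange L) ((d (i + 1)).baseChange L) (hcompL i)
  -- pointwise inequality
  have hle : ∀ i : ℤ, Module.finrank k (LinearMap.range ((d i).baseChange k))
      ≤ Module.finrank L (LinearMap.range ((d i).baseChange L)) := by
    intro i
    calc Module.finrank k (LinearMap.range ((d i).baseChange k))
        ≤ Module.finrank O (LinearMap.range (d i)) := finrank_range_baseChange_le (d i)
      _ = Module.finrank L (LinearMap.range ((d i).baseChange L)) :=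
        (finrank_range_baseChange_fractionRing (d i)).symm
  -- vanishing in low degrees
  obtain ⟨N0, hN0⟩ := hbdd.bddBelow
  have hsub : ∀ i : ℤ, i ≤ N0 - 1 → Subsingleton (C i) := by
    intro i hi
    by_contra hnt
    rw [not_subsingleton_iff_nontrivial] at hnt
    have := hN0 (Set.mem_setOf.mpr hnt)
    omega
  have hd0 : ∀ i : ℤ, i ≤ N0 - 1 → d i = 0 := by
    intro i hi
    haveI := hsub i hi
    apply LinearMap.ext
    intro x
    rw [Subsingleton.elim x 0, map_zero, map_zero]
  have hz : ∀ i : ℤ, i ≤ N0 - 1 →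
      Module.finrank k (LinearMap.range ((d i).baseChange k)) = 0 ∧
      Module.finrank L (LinearMap.range ((d i).baseChange L)) = 0 := by
    intro i hi
    refine ⟨?_, ?_⟩ <;>
      rw [hd0 i hi, LinearMap.baseChange_zero, LinearMap.range_zero, finrank_bot]
  -- telescoping: the two ranks agree everywhere
  have hall : ∀ i : ℤ, Module.finrank k (LinearMap.range ((d i).baseChange k))
      = Module.finrank L (LinearMap.range ((d i).baseChange L)) := by
    have hstep : ∀ i : ℤ, Module.finrank k (LinearMap.range ((d i).baseChange k))
        = Module.finrank L (LinearMap.range ((d i).baseChange L)) →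
        Module.finrank k (LinearMap.range ((d (i + 1)).baseChange k))
        = Module.finrank L (LinearMap.range ((d (i + 1)).baseChange L)) := by
      intro i hi
      have h1 := hEk i
      have h2 := hEL i
      have h3 := hdim i
      have h4 := hle (i + 1)
      omega
    intro i
    rcases le_or_gt i (N0 - 1) with h | h
    · rw [(hz i h).1, (hz i h).2]
    · have hbase : Module.finrank k (LinearMap.range ((d (N0 - 1)).baseChange k))
          = Module.finrank L (LinearMap.range ((d (N0 - 1)).baseChange L)) := by
        rw [(hz (N0 - 1) le_rfl).1, (hz (N0 - 1) le_rfl).2]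
      exact Int.le_induction
        (motive := fun n _ => Module.finrank k (LinearMap.range ((d n).baseChange k))
          = Module.finrank L (LinearMap.range ((d n).baseChange L)))
        hbase (fun n _ hn => hstep n hn) i (by omega)
  -- rank over k equals the O-rank of the image
  have hrk : ∀ i : ℤ, Module.finrank k (LinearMap.range ((d i).baseChange k))
      = Module.finrank O (LinearMap.range (d i)) := by
    intro i
    rw [hall i]
    exact finrank_range_baseChange_fractionRing (d i)
  -- saturation of images
  have hsat1 : ∀ (i : ℤ) (x : C (i + 1)),
      π • x ∈ LinearMap.range (d i) → x ∈ LinearMap.range (d i) := by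
    intro i
    exact mem_range_of_irreducible_smul hπirr hπker (d i) (hrk i)
  have hsat : ∀ (i : ℤ) (x : C (i + 1)) (a : O), a ≠ 0 →
      a • x ∈ LinearMap.range (d i) → x ∈ LinearMap.range (d i) := by
    intro i x a ha hax
    obtain ⟨n, u, rfl⟩ := IsDiscreteValuationRing.eq_unit_mul_pow_irreducible ha hπirr
    have h1 : π ^ n • x ∈ LinearMap.range (d i) := by
      have h2 := (LinearMap.range (d i)).smul_mem ((u⁻¹ : Oˣ) : O) hax
      rwa [smul_smul, ← mul_assoc, Units.inv_mul, one_mul] at h2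
    clear hax ha
    revert h1
    induction n with
    | zero =>
      intro h1
      simpa using h1
    | succ n ih =>
      intro h1
      exact ih (hsat1 i _ (by rwa [pow_succ, mul_comm, mul_smul] at h1))
  constructor
  · -- vanishing of cohomology away from s
    intro i hi
    haveI := hs i hi
    rw [Submodule.Quotient.subsingleton_iff, Submodule.eq_top_iff']
    intro y
    rw [Submodule.mem_comap]
    -- (y : C (i+1)) is a cocycle; base change to L is a coboundary
    have hyk : (1 : L) ⊗ₜ[O] (y : C (i + 1)) ∈ LinearMap.ker ((d (i + 1)).baseChange L) := by
      rw [LinearMap.mem_ker, LinearMap.baseChange_tmul, LinearMap.mem_ker.mp y.2,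
        TensorProduct.tmul_zero]
    have htop := Submodule.Quotient.subsingleton_iff.mp (hs i hi)
    have hmem : (⟨_, hyk⟩ : LinearMap.ker ((d (i + 1)).baseChange L)) ∈
        (LinearMap.range ((d i).baseChange L)).comap
          (LinearMap.ker ((d (i + 1)).baseChange L)).subtype := by
      rw [htop]; exact Submodule.mem_top
    rw [Submodule.mem_comap] at hmem
    obtain ⟨t, ht0, htmem⟩ := exists_smul_mem_range (d i) (y : C (i + 1)) hmem
    exact hsat i _ t ht0 htmem
  · -- freeness at s
    haveI : NoZeroSMulDivisors O (coh d s) := by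
      refine ⟨fun {a} {q} h => ?_⟩
      by_cases ha : a = 0
      · exact Or.inl ha
      right
      obtain ⟨y, rfl⟩ := Submodule.Quotient.mk_surjective _ q
      rw [← Submodule.Quotient.mk_smul, Submodule.Quotient.mk_eq_zero] at h
      rw [Submodule.Quotient.mk_eq_zero]
      rw [Submodule.mem_comap] at h ⊢
      refine hsat s _ a ha ?_
      simpa using h
    exact Module.free_of_finite_type_torsion_free'
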